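/- Let E be a real inner product space and let U and V be finite-dimensional subspaces of E with U ∩ V = {0}. Then there exists a constant γ with 0 ≤ γ < 1 such that for all u ∈ U and all v ∈ V, |⟨u, v⟩| ≤ γ‖u‖‖v‖. -/

import Mathlib

open scoped RealInnerProductSpace

/-- Strengthened Cauchy–Schwarz inequality: if `U` and `V` are finite-dimensional
subspaces of a real inner product space with trivial intersection, then there is a
constant `0 ≤ γ < 1` with `|⟪u, v⟫| ≤ γ‖u‖‖v‖` for all `u ∈ U`, `v ∈ V`. -/
theorem strengthened_cauchy_schwarz
    {E : Type*} [NormedAddCommGroup E] [InnerProductSpace ℝ E]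
    (U V : Submodule ℝ E) [FiniteDimensional ℝ U] [FiniteDimensional ℝ V]
    (hUV : U ⊓ V = ⊥) :
    ∃ γ : ℝ, 0 ≤ γ ∧ γ < 1 ∧
      ∀ u ∈ U, ∀ v ∈ V, |⟪u, v⟫| ≤ γ * ‖u‖ * ‖v‖ := by
  by_cases hU : ∃ u : U, ‖u‖ = 1
  · by_cases hV : ∃ v : V, ‖v‖ = 1
    · -- compactness argument
      set f : U × V → ℝ := fun p => |⟪(p.1 : E), (p.2 : E)⟫| with hf
      have hfc : Continuous f := by
        apply continuous_abs.comp
        exact continuous_inner.comp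
          ((continuous_subtype_val.comp continuous_fst).prodMk
            (continuous_subtype_val.comp continuous_snd))
      have hK : IsCompact ((Metric.sphere (0 : U) 1) ×ˢ (Metric.sphere (0 : V) 1)) :=
        (isCompact_sphere 0 1).prod (isCompact_sphere 0 1)
      obtain ⟨u₁, hu₁⟩ := hU
      obtain ⟨v₁, hv₁⟩ := hV
      have hne : ((Metric.sphere (0 : U) 1) ×ˢ (Metric.sphere (0 : V) 1)).Nonempty :=
        ⟨(u₁, v₁), by simp [hu₁, hv₁]⟩
      obtain ⟨⟨u₀, v₀⟩, hmem, hmax⟩ := hK.exists_isMaxOn hne hfc.continuousOn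
      simp only [Set.mem_prod, Metric.mem_sphere, dist_zero_right] at hmem
      obtain ⟨hu₀, hv₀⟩ := hmem
      refine ⟨f (u₀, v₀), abs_nonneg _, ?_, ?_⟩
      · -- γ < 1
        have hu₀E : ‖(u₀ : E)‖ = 1 := hu₀
        have hv₀E : ‖(v₀ : E)‖ = 1 := hv₀
        have hle : f (u₀, v₀) ≤ 1 := by
          have := abs_real_inner_le_norm (u₀ : E) (v₀ : E)
          simpa [f, hu₀E, hv₀E] using this
        rcases lt_or_eq_of_le hle with h | h
        · exact h
        · exfalso
          have h1 : |inner ℝ (u₀ : E) (v₀ : E) / (‖(u₀ : E)‖ * ‖(v₀ : E)‖)| = (1:ℝ) := by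
            rw [hu₀E, hv₀E, mul_one, div_one]
            exact h
          rw [abs_real_inner_div_norm_mul_norm_eq_one_iff] at h1
          obtain ⟨hx, r, hr, hyx⟩ := h1
          have hmemv : (v₀ : E) ∈ U ⊓ V := by
            refine ⟨?_, v₀.2⟩
            rw [hyx]
            exact U.smul_mem r u₀.2
          rw [hUV] at hmemv
          have hz : (v₀ : E) = 0 := (Submodule.mem_bot ℝ).mp hmemv
          rw [hz, norm_zero] at hv₀E
          norm_num at hv₀E
      · -- the bound
        intro u hu v hv
        by_cases hu0 : u = 0
        · simp [hu0]
        by_cases hv0 : v = 0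
        · simp [hv0]
        have hun : ‖u‖ ≠ 0 := norm_ne_zero_iff.mpr hu0
        have hvn : ‖v‖ ≠ 0 := norm_ne_zero_iff.mpr hv0
        set u' : U := ⟨‖u‖⁻¹ • u, U.smul_mem _ hu⟩
        set v' : V := ⟨‖v‖⁻¹ • v, V.smul_mem _ hv⟩
        have hu' : ‖u'‖ = 1 := by
          simp only [u', Submodule.coe_norm, norm_smul, norm_inv, norm_norm]
          field_simp
        have hv' : ‖v'‖ = 1 := by
          simp only [v', Submodule.coe_norm, norm_smul, norm_inv, norm_norm]
          field_simp
        have hb : f (u', v') ≤ f (u₀, v₀) :=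
          hmax (by simp [Set.mem_prod, hu', hv'])
        have hval : f (u', v') = |⟪u, v⟫| / (‖u‖ * ‖v‖) := by
          simp only [f, u', v', real_inner_smul_left, real_inner_smul_right, abs_mul,
            abs_inv, abs_norm]
          field_simp
        rw [hval, div_le_iff₀ (by positivity)] at hb
        calc |⟪u, v⟫| ≤ f (u₀, v₀) * (‖u‖ * ‖v‖) := hb
          _ = f (u₀, v₀) * ‖u‖ * ‖v‖ := by ring
    · -- V trivial
      refine ⟨0, le_refl 0, one_pos, fun u hu v hv => ?_⟩
      have hv0 : v = 0 := by
        by_contra h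
        exact hV ⟨⟨‖v‖⁻¹ • v, V.smul_mem _ hv⟩, by
          simp only [Submodule.coe_norm, norm_smul, norm_inv, norm_norm]
          exact inv_mul_cancel₀ (norm_ne_zero_iff.mpr h)⟩
      simp [hv0]
  · -- U trivial
    refine ⟨0, le_refl 0, one_pos, fun u hu v hv => ?_⟩
    have hu0 : u = 0 := by
      by_contra h
      exact hU ⟨⟨‖u‖⁻¹ • u, U.smul_mem _ hu⟩, by
        simp only [Submodule.coe_norm, norm_smul, norm_inv, norm_norm]
        exact inv_mul_cancel₀ (norm_ne_zero_iff.mpr h)⟩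
    simp [hu0]
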